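/- arXiv:1407.4546 — 2 statements merged into one kernel-verified Lean document; each statement's English description precedes it below -/
import Mathlib

section
/- For the Kochar kernel h(x_1, x_2; y_1, y_2) = I{yyxx or xyyx} − I{xxyy or yxxy} (where yyxx means max(y_1,y_2) ≤ min(x_1,x_2); xyyx means min(x_1,x_2) ≤ min(y_1,y_2) and max(y_1,y_2) ≤ max(x_1,x_2); xxyy means max(x_1,x_2) ≤ min(y_1,y_2); yxxy means min(y_1,y_2) ≤ min(x_1,x_2) and max(x_1,x_2) ≤ max(y_1,y_2)) with X_1, X_2 i.i.d. ~ F and, independently, Y_1, Y_2 i.i.d. ~ G: if F = G and F is continuous, then the projections satisfy h_1(x) = E[h(x, X_2; Y_1, Y_2)] = −(4/3)G(x)³ + 4G(x)² − 2G(x) and h_2(y) = E[h(X_1, X_2; y, Y_2)] = (4/3)G(y)³ − 4G(y)² + 2G(y) for every x, y ∈ ℝ, and σ_1² = Var h_1(X_1) = 8/105 and σ_2² = Var h_2(Y_1) = 8/105. -/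
/-- The Kochar kernel of order (2,2): indicator of pattern "yyxx or xyyx" minus
indicator of pattern "xxyy or yxxy". -/
noncomputable def kocharKernel (x₁ x₂ y₁ y₂ : ℝ) : ℝ :=
  (if (max y₁ y₂ ≤ min x₁ x₂) ∨
      (min x₁ x₂ ≤ min y₁ y₂ ∧ max y₁ y₂ ≤ max x₁ x₂) then (1 : ℝ) else 0) -
  (if (max x₁ x₂ ≤ min y₁ y₂) ∨
      (min y₁ y₂ ≤ min x₁ x₂ ∧ max x₁ x₂ ≤ max y₁ y₂) then (1 : ℝ) else 0)


set_option maxHeartbeats 1000000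

section KocharAux

open MeasureTheory ProbabilityTheory Filter Set Topology

variable {μ : Measure ℝ} [IsProbabilityMeasure μ] {G : ℝ → ℝ}

lemma cdf_eq_G (hG : ∀ t, G t = (μ (Iic t)).toReal) : cdf μ = G := by
  ext t
  rw [cdf_eq_real, measureReal_def, hG]

lemma measF_Iic (hG : ∀ t, G t = (μ (Iic t)).toReal) (t : ℝ) :
    μ (Iic t) = ENNReal.ofReal (G t) := by
  rw [hG t, ENNReal.ofReal_toReal (measure_ne_top _ _)]

lemma G_mono (hG : ∀ t, G t = (μ (Iic t)).toReal) : Monotone G := by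
  intro a b hab
  rw [hG a, hG b]
  exact ENNReal.toReal_mono (measure_ne_top _ _) (measure_mono (Iic_subset_Iic.mpr hab))

lemma G_nonneg (hG : ∀ t, G t = (μ (Iic t)).toReal) (t : ℝ) : 0 ≤ G t := by
  rw [hG t]; exact ENNReal.toReal_nonneg

lemma G_le_one (hG : ∀ t, G t = (μ (Iic t)).toReal) (t : ℝ) : G t ≤ 1 := by
  rw [hG t]
  exact ENNReal.toReal_le_of_le_ofReal zero_le_one (by simpa using prob_le_one)

lemma G_tendsto_atBot (hG : ∀ t, G t = (μ (Iic t)).toReal) : Tendsto G atBot (𝓝 0) := by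
  rw [← cdf_eq_G hG]; exact tendsto_cdf_atBot μ

lemma G_tendsto_atTop (hG : ∀ t, G t = (μ (Iic t)).toReal) : Tendsto G atTop (𝓝 1) := by
  rw [← cdf_eq_G hG]; exact tendsto_cdf_atTop μ

lemma measG_singleton (hG : ∀ t, G t = (μ (Iic t)).toReal) (hGc : Continuous G) (a : ℝ) :
    μ {a} = 0 := by
  have h1 : μ = (cdf μ).measure := (measure_cdf μ).symm
  rw [h1, StieltjesFunction.measure_singleton]
  have hl : Function.leftLim (⇑(cdf μ)) a = cdf μ a := by
    rw [cdf_eq_G hG]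
    exact leftLim_eq_of_tendsto
      ((hGc.tendsto a).mono_left nhdsWithin_le_nhds)
  rw [hl, sub_self, ENNReal.ofReal_zero]

lemma measG_Ioc (hG : ∀ t, G t = (μ (Iic t)).toReal) (a b : ℝ) :
    μ (Ioc a b) = ENNReal.ofReal (G b - G a) := by
  have h1 : μ = (cdf μ).measure := (measure_cdf μ).symm
  conv_lhs => rw [h1]
  rw [StieltjesFunction.measure_Ioc, cdf_eq_G hG]

lemma G_struct (hG : ∀ t, G t = (μ (Iic t)).toReal) (hGc : Continuous G) (u : ℝ) :
    ({a | G a ≤ u} = ∅ ∧ u ≤ 0) ∨ ({a | G a ≤ u} = univ ∧ 1 ≤ u) ∨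
      (∃ s, {a | G a ≤ u} = Iic s ∧ G s = u) := by
  set S := {a | G a ≤ u} with hS
  have hclosed : IsClosed S := isClosed_le hGc continuous_const
  by_cases hne : S.Nonempty
  · by_cases hbdd : BddAbove S
    · right; right
      have hmem : sSup S ∈ S := hclosed.csSup_mem hne hbdd
      refine ⟨sSup S, ?_, ?_⟩
      · apply Subset.antisymm
        · exact fun a ha => le_csSup hbdd ha
        · exact fun a ha => le_trans (G_mono hG ha) hmem
      · refine le_antisymm hmem ?_
        by_contra hlt
        push_neg at hlt
        have hopen : IsOpen {a | G a < u} := isOpen_lt hGc continuous_const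
        obtain ⟨ε, hε, hball⟩ := Metric.isOpen_iff.mp hopen (sSup S) hlt
        have hmem2 : sSup S + ε / 2 ∈ S := by
          have h2 : sSup S + ε / 2 ∈ {a | G a < u} := by
            apply hball
            rw [Metric.mem_ball, Real.dist_eq, add_sub_cancel_left,
              abs_of_pos (by linarith : (0:ℝ) < ε / 2)]
            linarith
          have h3 : G (sSup S + ε / 2) < u := h2
          exact h3.le
        have := le_csSup hbdd hmem2
        linarith
    · right; left
      have huniv : S = univ := by
        ext t
        simp only [mem_univ, iff_true]
        obtain ⟨a, haS, hta⟩ := not_bddAbove_iff.mp hbdd t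
        exact le_trans (G_mono hG hta.le) haS
      refine ⟨huniv, ?_⟩
      have hub : ∀ a, G a ≤ u := fun a => by
        have : a ∈ S := huniv ▸ mem_univ a
        exact this
      exact le_of_tendsto (G_tendsto_atTop hG) (Eventually.of_forall hub)
  · left
    rw [not_nonempty_iff_eq_empty] at hne
    refine ⟨hne, ?_⟩
    have hub : ∀ a, u ≤ G a := fun a => by
      by_contra h
      push_neg at h
      exact absurd (hne ▸ h.le : a ∈ (∅ : Set ℝ)) (notMem_empty a)
    exact ge_of_tendsto (G_tendsto_atBot hG) (Eventually.of_forall hub)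

lemma map_G_restrict (hG : ∀ t, G t = (μ (Iic t)).toReal) (hGc : Continuous G) (x : ℝ) :
    Measure.map G (μ.restrict (Iic x)) = volume.restrict (Ioc 0 (G x)) := by
  have hfin : IsFiniteMeasure (Measure.map G (μ.restrict (Iic x))) :=
    Measure.isFiniteMeasure_map _ _
  refine Measure.ext_of_Iic _ _ (fun u => ?_)
  rw [Measure.map_apply hGc.measurable measurableSet_Iic,
    Measure.restrict_apply (hGc.measurable measurableSet_Iic),
    Measure.restrict_apply measurableSet_Iic]
  have hIicIoc : Iic u ∩ Ioc 0 (G x) = Ioc 0 (min (G x) u) := by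
    ext t; simp only [mem_inter_iff, mem_Iic, mem_Ioc, le_min_iff]
    tauto
  rw [hIicIoc, Real.volume_Ioc, sub_zero]
  have hpre : G ⁻¹' Iic u = {a | G a ≤ u} := rfl
  rw [hpre]
  rcases G_struct hG hGc u with ⟨hset, hu⟩ | ⟨hset, hu⟩ | ⟨s, hset, hsu⟩
  · rw [hset, empty_inter, measure_empty]
    symm
    rw [ENNReal.ofReal_eq_zero]
    exact le_trans (min_le_right _ _) hu
  · rw [hset, univ_inter, measF_Iic hG]
    congr 1
    exact (min_eq_left (le_trans (G_le_one hG x) hu)).symm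
  · rw [hset, Iic_inter_Iic, measF_Iic hG]
    congr 1
    rw [← hsu, min_comm s x, (G_mono hG).map_min]

lemma map_G_full (hG : ∀ t, G t = (μ (Iic t)).toReal) (hGc : Continuous G) :
    Measure.map G μ = volume.restrict (Ioc 0 (1:ℝ)) := by
  have hfin : IsFiniteMeasure (Measure.map G μ) := Measure.isFiniteMeasure_map _ _
  refine Measure.ext_of_Iic _ _ (fun u => ?_)
  rw [Measure.map_apply hGc.measurable measurableSet_Iic,
    Measure.restrict_apply measurableSet_Iic]
  have hIicIoc : Iic u ∩ Ioc 0 (1:ℝ) = Ioc 0 (min (1:ℝ) u) := by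
    ext t; simp only [mem_inter_iff, mem_Iic, mem_Ioc, le_min_iff]
    tauto
  rw [hIicIoc, Real.volume_Ioc, sub_zero]
  have hpre : G ⁻¹' Iic u = {a | G a ≤ u} := rfl
  rw [hpre]
  rcases G_struct hG hGc u with ⟨hset, hu⟩ | ⟨hset, hu⟩ | ⟨s, hset, hsu⟩
  · rw [hset, measure_empty]
    symm
    rw [ENNReal.ofReal_eq_zero]
    exact le_trans (min_le_right _ _) hu
  · rw [hset, measure_univ, min_eq_left hu, ENNReal.ofReal_one]
  · rw [hset, measF_Iic hG, hsu, min_eq_right (hsu ▸ G_le_one hG s)]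

lemma int_G_restrict (hG : ∀ t, G t = (μ (Iic t)).toReal) (hGc : Continuous G)
    {f : ℝ → ℝ} (hf : Continuous f) (x : ℝ) :
    ∫ a in Iic x, f (G a) ∂μ = ∫ u in (0:ℝ)..(G x), f u := by
  rw [intervalIntegral.integral_of_le (G_nonneg hG x), ← map_G_restrict hG hGc x,
    integral_map hGc.measurable.aemeasurable hf.aestronglyMeasurable]

lemma int_G_full (hG : ∀ t, G t = (μ (Iic t)).toReal) (hGc : Continuous G)
    {f : ℝ → ℝ} (hf : Continuous f) :
    ∫ a, f (G a) ∂μ = ∫ u in (0:ℝ)..(1:ℝ), f u := by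
  rw [intervalIntegral.integral_of_le zero_le_one, ← map_G_full hG hGc,
    integral_map hGc.measurable.aemeasurable hf.aestronglyMeasurable]


lemma kochar_measurable4 :
    Measurable (fun z : ℝ × ℝ × ℝ × ℝ => kocharKernel z.1 z.2.1 z.2.2.1 z.2.2.2) := by
  unfold kocharKernel
  have m1 : Measurable fun z : ℝ × ℝ × ℝ × ℝ => z.1 := measurable_fst
  have m2 : Measurable fun z : ℝ × ℝ × ℝ × ℝ => z.2.1 := measurable_snd.fst
  have m3 : Measurable fun z : ℝ × ℝ × ℝ × ℝ => z.2.2.1 := measurable_snd.snd.fst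
  have m4 : Measurable fun z : ℝ × ℝ × ℝ × ℝ => z.2.2.2 := measurable_snd.snd.snd
  have hxmin := m1.min m2
  have hxmax := m1.max m2
  have hymin := m3.min m4
  have hymax := m3.max m4
  apply Measurable.sub
  · apply Measurable.ite _ measurable_const measurable_const
    rw [show {z : ℝ × ℝ × ℝ × ℝ | (max z.2.2.1 z.2.2.2 ≤ min z.1 z.2.1) ∨
        (min z.1 z.2.1 ≤ min z.2.2.1 z.2.2.2 ∧ max z.2.2.1 z.2.2.2 ≤ max z.1 z.2.1)} =
      {z : ℝ × ℝ × ℝ × ℝ | max z.2.2.1 z.2.2.2 ≤ min z.1 z.2.1} ∪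
      ({z | min z.1 z.2.1 ≤ min z.2.2.1 z.2.2.2} ∩ {z | max z.2.2.1 z.2.2.2 ≤ max z.1 z.2.1})
      from rfl]
    exact (measurableSet_le hymax hxmin).union
      ((measurableSet_le hxmin hymin).inter (measurableSet_le hymax hxmax))
  · apply Measurable.ite _ measurable_const measurable_const
    rw [show {z : ℝ × ℝ × ℝ × ℝ | (max z.1 z.2.1 ≤ min z.2.2.1 z.2.2.2) ∨
        (min z.2.2.1 z.2.2.2 ≤ min z.1 z.2.1 ∧ max z.1 z.2.1 ≤ max z.2.2.1 z.2.2.2)} =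
      {z : ℝ × ℝ × ℝ × ℝ | max z.1 z.2.1 ≤ min z.2.2.1 z.2.2.2} ∪
      ({z | min z.2.2.1 z.2.2.2 ≤ min z.1 z.2.1} ∩ {z | max z.1 z.2.1 ≤ max z.2.2.1 z.2.2.2})
      from rfl]
    exact (measurableSet_le hxmax hymin).union
      ((measurableSet_le hymin hxmin).inter (measurableSet_le hxmax hymax))

lemma kochar_measurable3 (x : ℝ) :
    Measurable (fun z : ℝ × ℝ × ℝ => kocharKernel x z.1 z.2.1 z.2.2) :=
  kochar_measurable4.comp (measurable_const.prodMk measurable_id)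

lemma kochar_measurable2 (x a : ℝ) :
    Measurable (fun q : ℝ × ℝ => kocharKernel x a q.1 q.2) :=
  kochar_measurable4.comp
    (measurable_const.prodMk (measurable_const.prodMk measurable_id))

lemma kochar_abs_le (x₁ x₂ y₁ y₂ : ℝ) : |kocharKernel x₁ x₂ y₁ y₂| ≤ 1 := by
  unfold kocharKernel
  split_ifs <;> norm_num

lemma kochar_antisymm (x₁ x₂ y₁ y₂ : ℝ) :
    kocharKernel x₁ x₂ y₁ y₂ = -kocharKernel y₁ y₂ x₁ x₂ := by
  unfold kocharKernel; ring

lemma meas_union_nullL {s t : Set ℝ} (h : μ s = 0) : μ (s ∪ t) = μ t :=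
  le_antisymm (le_trans (measure_union_le _ _) (by rw [h, zero_add]))
    (measure_mono subset_union_right)

lemma meas_union_nullR {s t : Set ℝ} (h : μ t = 0) : μ (s ∪ t) = μ s := by
  rw [union_comm]; exact meas_union_nullL h

lemma measG_Icc (hG : ∀ t, G t = (μ (Iic t)).toReal) (hGc : Continuous G)
    {a b : ℝ} (hab : a ≤ b) :
    μ (Icc a b) = ENNReal.ofReal (G b - G a) := by
  have h1 : Icc a b = {a} ∪ Ioc a b := by
    ext t; simp only [mem_Icc, mem_union, mem_singleton_iff, mem_Ioc]
    constructor
    · rintro ⟨h1, h2⟩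
      rcases eq_or_lt_of_le h1 with h | h
      · exact Or.inl h.symm
      · exact Or.inr ⟨h, h2⟩
    · rintro (rfl | ⟨h1, h2⟩)
      · exact ⟨le_refl _, hab⟩
      · exact ⟨h1.le, h2⟩
  rw [h1, meas_union_nullL (measG_singleton hG hGc a), measG_Ioc hG]

lemma measG_Ici (hG : ∀ t, G t = (μ (Iic t)).toReal) (hGc : Continuous G) (t : ℝ) :
    μ (Ici t) = ENNReal.ofReal (1 - G t) := by
  have h1 : Ici t = (Iio t)ᶜ := by simp
  have h2 : μ (Iio t) = ENNReal.ofReal (G t) := by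
    have : Iic t = Iio t ∪ {t} := (Iio_union_right).symm
    have h3 := measF_Iic hG t
    rw [this, meas_union_nullR (measG_singleton hG hGc t)] at h3
    exact h3
  rw [h1, measure_compl measurableSet_Iio (measure_ne_top _ _), h2, measure_univ,
    ← ENNReal.ofReal_one, ← ENNReal.ofReal_sub _ (G_nonneg hG t)]

lemma integrable_of_bdd {α : Type*} [MeasurableSpace α] {ν : Measure α} [IsFiniteMeasure ν]
    {f : α → ℝ} (hm : AEStronglyMeasurable f ν) {C : ℝ} (h : ∀ a, |f a| ≤ C) :
    Integrable f ν :=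
  (integrable_const C).mono' hm (Eventually.of_forall (by simpa [Real.norm_eq_abs] using h))

lemma inner_eq (hG : ∀ t, G t = (μ (Iic t)).toReal) (hGc : Continuous G)
    {x a : ℝ} (hne : x ≠ a) :
    ∫ q : ℝ × ℝ, kocharKernel x a q.1 q.2 ∂(μ.prod μ) =
      (G (min x a))^2 + (G (max x a) - G (min x a))^2
        - ((1 - G (max x a))^2 + 2 * (G (min x a)) * (1 - G (max x a))) := by
  set m := min x a with hm
  set M := max x a with hM
  have hmM : m < M := min_lt_max.mpr hne
  set A : Set (ℝ × ℝ) := (Iic m ×ˢ Iic m) ∪ (Icc m M ×ˢ Icc m M) with hA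
  set B : Set (ℝ × ℝ) := (Ici M ×ˢ Ici M) ∪ ((Iic m ×ˢ Ici M) ∪ (Ici M ×ˢ Iic m)) with hB
  have hAmeas : MeasurableSet A :=
    ((measurableSet_Iic.prod measurableSet_Iic).union
      (measurableSet_Icc.prod measurableSet_Icc))
  have hBmeas : MeasurableSet B :=
    ((measurableSet_Ici.prod measurableSet_Ici).union
      ((measurableSet_Iic.prod measurableSet_Ici).union
        (measurableSet_Ici.prod measurableSet_Iic)))
  have hpt : ∀ q : ℝ × ℝ, kocharKernel x a q.1 q.2 =
      A.indicator (fun _ => (1:ℝ)) q - B.indicator (fun _ => (1:ℝ)) q := by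
    rintro ⟨b, c⟩
    unfold kocharKernel
    rw [Set.indicator_apply, Set.indicator_apply]
    congr 1
    · congr 1
      simp only [hA, mem_union, mem_prod, mem_Iic, mem_Icc, max_le_iff, le_min_iff, ← hm, ← hM]
      rw [eq_iff_iff]
      constructor
      · rintro (⟨h1, h2⟩ | ⟨⟨h1, h2⟩, h3, h4⟩)
        · exact Or.inl ⟨h1, h2⟩
        · exact Or.inr ⟨⟨h1, h3⟩, h2, h4⟩
      · rintro (⟨h1, h2⟩ | ⟨⟨h1, h2⟩, h3, h4⟩)
        · exact Or.inl ⟨h1, h2⟩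
        · exact Or.inr ⟨⟨h1, h3⟩, h2, h4⟩
    · congr 1
      simp only [hB, mem_union, mem_prod, mem_Iic, mem_Ici, max_le_iff, le_min_iff,
        min_le_iff, le_max_iff, ← hm, ← hM]
      rw [eq_iff_iff]
      constructor
      · rintro (⟨h1, h2⟩ | ⟨(h1 | h1), (h2 | h2)⟩)
        · exact Or.inl ⟨h1, h2⟩
        · exact absurd (le_trans h2 h1) (not_le.mpr hmM)
        · exact Or.inr (Or.inl ⟨h1, h2⟩)
        · exact Or.inr (Or.inr ⟨h2, h1⟩)
        · exact absurd (le_trans h2 h1) (not_le.mpr hmM)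
      · rintro (⟨h1, h2⟩ | ⟨h1, h2⟩ | ⟨h1, h2⟩)
        · exact Or.inl ⟨h1, h2⟩
        · exact Or.inr ⟨Or.inl h1, Or.inr h2⟩
        · exact Or.inr ⟨Or.inr h2, Or.inl h1⟩
  rw [integral_congr_ae (Eventually.of_forall hpt)]
  have hintA : Integrable (A.indicator (fun _ => (1:ℝ))) (μ.prod μ) :=
    (integrable_const (1:ℝ)).indicator hAmeas
  have hintB : Integrable (B.indicator (fun _ => (1:ℝ))) (μ.prod μ) :=
    (integrable_const (1:ℝ)).indicator hBmeas
  rw [integral_sub hintA hintB, integral_indicator_const _ hAmeas,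
    integral_indicator_const _ hBmeas]
  -- measure of A
  have hGmM : G m ≤ G M := G_mono hG hmM.le
  have hAval : (μ.prod μ) A = ENNReal.ofReal (G m * G m)
      + ENNReal.ofReal ((G M - G m) * (G M - G m)) := by
    have hinter : (Iic m ×ˢ Iic m) ∩ (Icc m M ×ˢ Icc m M) = ({m} ×ˢ {m} : Set (ℝ × ℝ)) := by
      rw [Set.prod_inter_prod]
      have : Iic m ∩ Icc m M = {m} := by
        ext t
        simp only [mem_inter_iff, mem_Iic, mem_Icc, mem_singleton_iff]
        constructor
        · rintro ⟨h1, h2, h3⟩; exact le_antisymm h1 h2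
        · rintro rfl; exact ⟨le_refl _, le_refl _, hmM.le⟩
      rw [this]
    have hnull : (μ.prod μ) ((Iic m ×ˢ Iic m) ∩ (Icc m M ×ˢ Icc m M)) = 0 := by
      rw [hinter, Measure.prod_prod, measG_singleton hG hGc, zero_mul]
    rw [hA, measure_union₀ ((measurableSet_Icc.prod measurableSet_Icc).nullMeasurableSet) hnull,
      Measure.prod_prod, Measure.prod_prod, measF_Iic hG, measG_Icc hG hGc hmM.le,
      ← ENNReal.ofReal_mul (G_nonneg hG m), ← ENNReal.ofReal_mul (by linarith)]
  have hBval : (μ.prod μ) B = ENNReal.ofReal ((1 - G M) * (1 - G M))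
      + (ENNReal.ofReal (G m * (1 - G M)) + ENNReal.ofReal ((1 - G M) * G m)) := by
    have hd1 : Disjoint (Iic m) (Ici M) := by
      rw [Set.disjoint_left]
      intro t ht1 ht2
      exact absurd (le_trans ht2 ht1) (not_le.mpr hmM)
    have hdisj2 : Disjoint (Iic m ×ˢ Ici M) (Ici M ×ˢ Iic m) :=
      Set.disjoint_left.mpr (fun ⟨b, c⟩ ⟨hb, hc⟩ ⟨hb', hc'⟩ =>
        (Set.disjoint_left.mp hd1) hb hb')
    have hdisj1 : Disjoint (Ici M ×ˢ Ici M) ((Iic m ×ˢ Ici M) ∪ (Ici M ×ˢ Iic m)) := by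
      apply Disjoint.union_right
      · exact Set.disjoint_left.mpr (fun ⟨b, c⟩ ⟨hb, hc⟩ ⟨hb', hc'⟩ =>
          (Set.disjoint_left.mp hd1) hb' hb)
      · exact Set.disjoint_left.mpr (fun ⟨b, c⟩ ⟨hb, hc⟩ ⟨hb', hc'⟩ =>
          (Set.disjoint_left.mp hd1) hc' hc)
    rw [hB, measure_union hdisj1 ((measurableSet_Iic.prod measurableSet_Ici).union
        (measurableSet_Ici.prod measurableSet_Iic)),
      measure_union hdisj2 (measurableSet_Ici.prod measurableSet_Iic),
      Measure.prod_prod, Measure.prod_prod, Measure.prod_prod,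
      measF_Iic hG, measG_Ici hG hGc,
      ← ENNReal.ofReal_mul (by linarith [G_le_one hG M]),
      ← ENNReal.ofReal_mul (G_nonneg hG m),
      ← ENNReal.ofReal_mul (by linarith [G_le_one hG M])]
  rw [measureReal_def, measureReal_def, hAval, hBval]
  have h1M : (0:ℝ) ≤ 1 - G M := by linarith [G_le_one hG M]
  have hGm : (0:ℝ) ≤ G m := G_nonneg hG m
  rw [ENNReal.toReal_add (by simp) (by simp), ENNReal.toReal_add (by simp) (by simp),
    ENNReal.toReal_add (by simp) (by simp)]
  rw [ENNReal.toReal_ofReal (by positivity), ENNReal.toReal_ofReal (by nlinarith),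
    ENNReal.toReal_ofReal (by positivity), ENNReal.toReal_ofReal (by positivity),
    ENNReal.toReal_ofReal (by positivity)]
  simp only [smul_eq_mul, mul_one]
  ring

lemma poly_int2 (A B C c : ℝ) :
    ∫ t in (0:ℝ)..c, (A*t^2 + B*t + C) = A*c^3/3 + B*c^2/2 + C*c := by
  have i1 : IntervalIntegrable (fun t : ℝ => A*t^2) volume 0 c :=
    (by continuity : Continuous fun t : ℝ => A*t^2).intervalIntegrable _ _
  have i2 : IntervalIntegrable (fun t : ℝ => B*t) volume 0 c :=
    (by continuity : Continuous fun t : ℝ => B*t).intervalIntegrable _ _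
  have i3 : IntervalIntegrable (fun _ : ℝ => C) volume 0 c :=
    intervalIntegrable_const
  rw [intervalIntegral.integral_add (i1.add i2) i3, intervalIntegral.integral_add i1 i2,
    intervalIntegral.integral_const_mul, intervalIntegral.integral_const_mul,
    integral_pow, integral_id, intervalIntegral.integral_const]
  push_cast
  simp only [smul_eq_mul]
  ring

lemma T_eq (hG : ∀ t, G t = (μ (Iic t)).toReal) (hGc : Continuous G) (x : ℝ) :
    ∫ z : ℝ × ℝ × ℝ, kocharKernel x z.1 z.2.1 z.2.2 ∂(μ.prod (μ.prod μ)) =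
      -(4/3)*(G x)^3 + 4*(G x)^2 - 2*(G x) := by
  have hK3 := kochar_measurable3 x
  have hint3 : Integrable (fun z : ℝ × ℝ × ℝ => kocharKernel x z.1 z.2.1 z.2.2)
      (μ.prod (μ.prod μ)) :=
    integrable_of_bdd hK3.aestronglyMeasurable (fun z => kochar_abs_le _ _ _ _)
  rw [integral_prod _ hint3]
  set I : ℝ → ℝ := fun a => ∫ w : ℝ × ℝ, kocharKernel x a w.1 w.2 ∂(μ.prod μ) with hI
  have hIsm : StronglyMeasurable I := hK3.stronglyMeasurable.integral_prod_right'
  have hIbd : ∀ a, |I a| ≤ 1 := by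
    intro a
    rw [← Real.norm_eq_abs]
    calc ‖I a‖ ≤ 1 * ((μ.prod μ) univ).toReal := by
          apply norm_integral_le_of_norm_le_const
          exact Eventually.of_forall (fun w => by
            rw [Real.norm_eq_abs]; exact kochar_abs_le _ _ _ _)
      _ = 1 := by simp
  have hIint : Integrable I μ := integrable_of_bdd hIsm.aestronglyMeasurable hIbd
  rw [← integral_add_compl measurableSet_Iic hIint, compl_Iic]
  have hae : ∀ᵐ a ∂μ, a ≠ x := by
    rw [ae_iff]
    simpa [not_not] using measG_singleton hG hGc x
  set g := G x with hg
  have h1 : ∫ a in Iic x, I a ∂μ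
      = ∫ a in Iic x, (2*(G a)^2 + (-2)*(G a) + (2*g - 1)) ∂μ := by
    apply integral_congr_ae
    filter_upwards [ae_restrict_mem measurableSet_Iic, ae_restrict_of_ae hae] with a hax hne
    have hv := inner_eq (μ := μ) hG hGc (Ne.symm hne)
    rw [min_eq_right hax, max_eq_left hax] at hv
    show (∫ q : ℝ × ℝ, kocharKernel x a q.1 q.2 ∂(μ.prod μ)) = _
    rw [hv]
    ring
  have h2 : ∫ a in Ioi x, I a ∂μ
      = ∫ a in Ioi x, (0*(G a)^2 + 2*(G a) + (2*g^2 - 2*g - 1)) ∂μ := by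
    apply integral_congr_ae
    filter_upwards [ae_restrict_mem measurableSet_Ioi] with a hax
    have hv := inner_eq (μ := μ) hG hGc (ne_of_lt hax)
    rw [min_eq_left (le_of_lt hax), max_eq_right (le_of_lt hax)] at hv
    show (∫ q : ℝ × ℝ, kocharKernel x a q.1 q.2 ∂(μ.prod μ)) = _
    rw [hv]
    ring
  have hcont1 : Continuous fun t : ℝ => 2*t^2 + (-2)*t + (2*g - 1) := by continuity
  have hcont2 : Continuous fun t : ℝ => 0*t^2 + 2*t + (2*g^2 - 2*g - 1) := by continuity
  have hphint : Integrable (fun a => 0*(G a)^2 + 2*(G a) + (2*g^2 - 2*g - 1)) μ := by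
    apply integrable_of_bdd (hcont2.comp hGc).aestronglyMeasurable
      (C := 2 + |2*g^2 - 2*g - 1|)
    intro a
    simp only [Function.comp_apply]
    have h1a := G_nonneg hG a
    have h2a := G_le_one hG a
    rw [abs_le]
    constructor
    · have := neg_abs_le (2*g^2 - 2*g - 1); nlinarith
    · have := le_abs_self (2*g^2 - 2*g - 1); nlinarith
  have h3 : ∫ a in Ioi x, (0*(G a)^2 + 2*(G a) + (2*g^2 - 2*g - 1)) ∂μ
      = (∫ a, (0*(G a)^2 + 2*(G a) + (2*g^2 - 2*g - 1)) ∂μ)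
        - ∫ a in Iic x, (0*(G a)^2 + 2*(G a) + (2*g^2 - 2*g - 1)) ∂μ := by
    rw [← integral_add_compl measurableSet_Iic hphint, compl_Iic]
    ring
  rw [h1, h2, h3,
    int_G_restrict hG hGc hcont1 x,
    int_G_restrict hG hGc hcont2 x,
    int_G_full hG hGc hcont2,
    poly_int2, poly_int2, poly_int2]
  ring

lemma pint_mean : ∫ u in (0:ℝ)..1, (-(4/3)*u^3 + 4*u^2 - 2*u) = 0 := by
  have h : ∀ u : ℝ, (-(4/3)*u^3 + 4*u^2 - 2*u)
      = (-(4/3))*u^3 + 4*u^2 + (-2)*u := by intro u; ring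
  rw [intervalIntegral.integral_congr (fun u _ => h u)]
  have i3 : IntervalIntegrable (fun u : ℝ => (-(4/3))*u^3) volume 0 1 :=
    (by continuity : Continuous fun u : ℝ => (-(4/3))*u^3).intervalIntegrable _ _
  have i2 : IntervalIntegrable (fun u : ℝ => 4*u^2) volume 0 1 :=
    (by continuity : Continuous fun u : ℝ => 4*u^2).intervalIntegrable _ _
  have i1 : IntervalIntegrable (fun u : ℝ => (-2)*u^1) volume 0 1 :=
    (by continuity : Continuous fun u : ℝ => (-2)*u^1).intervalIntegrable _ _
  have h2 : ∀ u : ℝ, (-(4/3))*u^3 + 4*u^2 + (-2)*u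
      = (-(4/3))*u^3 + 4*u^2 + (-2)*u^1 := by intro u; ring
  rw [intervalIntegral.integral_congr (fun u _ => h2 u)]
  rw [intervalIntegral.integral_add (i3.add i2) i1, intervalIntegral.integral_add i3 i2]
  simp only [intervalIntegral.integral_const_mul, integral_pow]
  norm_num

lemma pint_sq : ∫ u in (0:ℝ)..1, (-(4/3)*u^3 + 4*u^2 - 2*u)^2 = 8/105 := by
  have h : ∀ u : ℝ, (-(4/3)*u^3 + 4*u^2 - 2*u)^2
      = (16/9)*u^6 + (-32/3)*u^5 + (64/3)*u^4 + (-16)*u^3 + 4*u^2 := by intro u; ring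
  rw [intervalIntegral.integral_congr (fun u _ => h u)]
  have i6 : IntervalIntegrable (fun u : ℝ => (16/9)*u^6) volume 0 1 :=
    (by continuity : Continuous fun u : ℝ => (16/9)*u^6).intervalIntegrable _ _
  have i5 : IntervalIntegrable (fun u : ℝ => (-32/3)*u^5) volume 0 1 :=
    (by continuity : Continuous fun u : ℝ => (-32/3)*u^5).intervalIntegrable _ _
  have i4 : IntervalIntegrable (fun u : ℝ => (64/3)*u^4) volume 0 1 :=
    (by continuity : Continuous fun u : ℝ => (64/3)*u^4).intervalIntegrable _ _
  have i3 : IntervalIntegrable (fun u : ℝ => (-16)*u^3) volume 0 1 :=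
    (by continuity : Continuous fun u : ℝ => (-16)*u^3).intervalIntegrable _ _
  have i2 : IntervalIntegrable (fun u : ℝ => 4*u^2) volume 0 1 :=
    (by continuity : Continuous fun u : ℝ => 4*u^2).intervalIntegrable _ _
  rw [intervalIntegral.integral_add (((i6.add i5).add i4).add i3) i2,
    intervalIntegral.integral_add ((i6.add i5).add i4) i3,
    intervalIntegral.integral_add (i6.add i5) i4,
    intervalIntegral.integral_add i6 i5]
  simp only [intervalIntegral.integral_const_mul, integral_pow]
  norm_num


end KocharAux

open MeasureTheory ProbabilityTheory Filter Finset

/-- Kochar kernel projections and their variances when F = G continuous. -/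
theorem kochar_projections
    {Ω : Type*} [MeasureSpace Ω] [IsProbabilityMeasure (ℙ : Measure Ω)]
    (X₁ X₂ Y₁ Y₂ : Ω → ℝ)
    (hX₁ : Measurable X₁) (hX₂ : Measurable X₂)
    (hY₁ : Measurable Y₁) (hY₂ : Measurable Y₂)
    (hindep : iIndepFun ![X₁, X₂, Y₁, Y₂] ℙ)
    (hXid : IdentDistrib X₂ X₁ ℙ ℙ) (hYid : IdentDistrib Y₂ Y₁ ℙ ℙ)
    (F G : ℝ → ℝ)
    (hF : ∀ t, F t = (ℙ {ω | X₁ ω ≤ t}).toReal)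
    (hG : ∀ t, G t = (ℙ {ω | Y₁ ω ≤ t}).toReal)
    (hFG : F = G) (hFcont : Continuous F) :
    (∀ x : ℝ, (∫ ω, kocharKernel x (X₂ ω) (Y₁ ω) (Y₂ ω) ∂ℙ)
        = -(4/3) * (G x)^3 + 4 * (G x)^2 - 2 * G x) ∧
    (∀ y : ℝ, (∫ ω, kocharKernel (X₁ ω) (X₂ ω) y (Y₂ ω) ∂ℙ)
        = (4/3) * (G y)^3 - 4 * (G y)^2 + 2 * G y) ∧
    variance (fun ω => ∫ ω', kocharKernel (X₁ ω) (X₂ ω') (Y₁ ω') (Y₂ ω') ∂ℙ) ℙ = 8/105 ∧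
    variance (fun ω => ∫ ω', kocharKernel (X₁ ω') (X₂ ω') (Y₁ ω) (Y₂ ω') ∂ℙ) ℙ = 8/105 := by
  set μ : Measure ℝ := Measure.map X₁ ℙ with hμ
  haveI : IsProbabilityMeasure μ := Measure.isProbabilityMeasure_map hX₁.aemeasurable
  have hGiic : ∀ t, G t = (μ (Set.Iic t)).toReal := by
    intro t
    rw [← hFG, hF t, hμ, Measure.map_apply hX₁ measurableSet_Iic]
    rfl
  have hGc : Continuous G := hFG ▸ hFcont
  have hmX2 : Measure.map X₂ ℙ = μ := hXid.map_eq
  have hmY1 : Measure.map Y₁ ℙ = μ := by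
    refine Measure.ext_of_Iic _ _ (fun t => ?_)
    rw [Measure.map_apply hY₁ measurableSet_Iic, measF_Iic hGiic t, hG t,
      ENNReal.ofReal_toReal (measure_ne_top _ _)]
    rfl
  have hmY2 : Measure.map Y₂ ℙ = μ := hYid.map_eq.trans hmY1
  have hmeas : ∀ i, Measurable (![X₁, X₂, Y₁, Y₂] i) := by
    intro i
    fin_cases i <;> simpa using ‹_›
  have law3 : ∀ (U V W : Ω → ℝ), Measurable U → Measurable V → Measurable W →
      IndepFun V W ℙ → IndepFun U (fun ω => (V ω, W ω)) ℙ →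
      Measure.map U ℙ = μ → Measure.map V ℙ = μ → Measure.map W ℙ = μ →
      Measure.map (fun ω => (U ω, V ω, W ω)) ℙ = μ.prod (μ.prod μ) := by
    intro U V W hU hV hW hVW hUVW hmU hmV hmW
    have hpair : Measure.map (fun ω => (V ω, W ω)) ℙ = μ.prod μ := by
      rw [(indepFun_iff_map_prod_eq_prod_map_map hV.aemeasurable hW.aemeasurable).mp hVW,
        hmV, hmW]
    have h2 : Measure.map (fun ω => (U ω, V ω, W ω)) ℙ
        = (Measure.map U ℙ).prod (Measure.map (fun ω => (V ω, W ω)) ℙ) :=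
      (indepFun_iff_map_prod_eq_prod_map_map hU.aemeasurable
        (hV.prodMk hW).aemeasurable).mp hUVW
    rw [h2, hmU, hpair]
  have iYY : IndepFun Y₁ Y₂ ℙ := hindep.indepFun (show (2:Fin 4) ≠ 3 by decide)
  have iX2YY : IndepFun X₂ (fun ω => (Y₁ ω, Y₂ ω)) ℙ :=
    (hindep.indepFun_prodMk hmeas 2 3 1 (by decide) (by decide)).symm
  have iXX : IndepFun X₁ X₂ ℙ := hindep.indepFun (show (0:Fin 4) ≠ 1 by decide)
  have iY2XX : IndepFun Y₂ (fun ω => (X₁ ω, X₂ ω)) ℙ :=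
    (hindep.indepFun_prodMk hmeas 0 1 3 (by decide) (by decide)).symm
  have hlaw1 : Measure.map (fun ω => (X₂ ω, Y₁ ω, Y₂ ω)) ℙ = μ.prod (μ.prod μ) :=
    law3 _ _ _ hX₂ hY₁ hY₂ iYY iX2YY hmX2 hmY1 hmY2
  have hlaw2 : Measure.map (fun ω => (Y₂ ω, X₁ ω, X₂ ω)) ℙ = μ.prod (μ.prod μ) :=
    law3 _ _ _ hY₂ hX₁ hX₂ iXX iY2XX hmY2 hμ.symm hmX2
  have part1 : ∀ x : ℝ, (∫ ω, kocharKernel x (X₂ ω) (Y₁ ω) (Y₂ ω) ∂ℙ)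
      = -(4/3) * (G x)^3 + 4 * (G x)^2 - 2 * G x := by
    intro x
    have hint : ∫ ω, kocharKernel x (X₂ ω) (Y₁ ω) (Y₂ ω) ∂ℙ
        = ∫ z : ℝ × ℝ × ℝ, kocharKernel x z.1 z.2.1 z.2.2
            ∂(Measure.map (fun ω => (X₂ ω, Y₁ ω, Y₂ ω)) ℙ) := by
      rw [integral_map (hX₂.prodMk (hY₁.prodMk hY₂)).aemeasurable
        (kochar_measurable3 x).aestronglyMeasurable]
    rw [hint, hlaw1, T_eq hGiic hGc x]
  have part2 : ∀ y : ℝ, (∫ ω, kocharKernel (X₁ ω) (X₂ ω) y (Y₂ ω) ∂ℙ)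
      = (4/3) * (G y)^3 - 4 * (G y)^2 + 2 * G y := by
    intro y
    have hpt : ∀ ω, kocharKernel (X₁ ω) (X₂ ω) y (Y₂ ω)
        = -kocharKernel y (Y₂ ω) (X₁ ω) (X₂ ω) := fun ω => kochar_antisymm _ _ _ _
    rw [integral_congr_ae (Filter.Eventually.of_forall hpt), integral_neg]
    have hint : ∫ ω, kocharKernel y (Y₂ ω) (X₁ ω) (X₂ ω) ∂ℙ
        = ∫ z : ℝ × ℝ × ℝ, kocharKernel y z.1 z.2.1 z.2.2
            ∂(Measure.map (fun ω => (Y₂ ω, X₁ ω, X₂ ω)) ℙ) := by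
      rw [integral_map (hY₂.prodMk (hX₁.prodMk hX₂)).aemeasurable
        (kochar_measurable3 y).aestronglyMeasurable]
    rw [hint, hlaw2, T_eq hGiic hGc y]
    ring
  have hp : Continuous (fun u : ℝ => -(4/3)*u^3 + 4*u^2 - 2*u) := by continuity
  have hpsq : Continuous (fun u : ℝ => (-(4/3)*u^3 + 4*u^2 - 2*u)^2) := by continuity
  have hvar : ∀ (Z : Ω → ℝ), Measurable Z → Measure.map Z ℙ = μ →
      variance (fun ω => -(4/3)*(G (Z ω))^3 + 4*(G (Z ω))^2 - 2*(G (Z ω))) ℙ = 8/105 := by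
    intro Z hZ hmZ
    set q : ℝ → ℝ := fun t => -(4/3)*(G t)^3 + 4*(G t)^2 - 2*(G t) with hq
    have hqc : Continuous q := hp.comp hGc
    have hbd : ∀ t, |q t| ≤ 8 := by
      intro t
      have h1 := G_nonneg hGiic t
      have h2 := G_le_one hGiic t
      rw [hq, abs_le]
      constructor <;> nlinarith
    have hmem : MemLp (fun ω => q (Z ω)) 2 ℙ :=
      MemLp.of_bound (hqc.measurable.comp hZ).aestronglyMeasurable 8
        (Filter.Eventually.of_forall fun ω => by rw [Real.norm_eq_abs]; exact hbd _)
    rw [variance_eq_sub hmem]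
    have hint1 : ∫ ω, q (Z ω) ∂ℙ = ∫ u in (0:ℝ)..1, (-(4/3)*u^3 + 4*u^2 - 2*u) := by
      rw [← integral_map hZ.aemeasurable hqc.aestronglyMeasurable, hmZ]
      exact int_G_full hGiic hGc hp
    have hint2 : ∫ ω, (q (Z ω))^2 ∂ℙ
        = ∫ u in (0:ℝ)..1, (-(4/3)*u^3 + 4*u^2 - 2*u)^2 := by
      have hqsq : Continuous (fun t : ℝ => (q t)^2) := hqc.pow 2
      rw [← integral_map hZ.aemeasurable hqsq.aestronglyMeasurable, hmZ]
      exact int_G_full hGiic hGc hpsq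
    simp only [Pi.pow_apply]
    rw [hint2, hint1, pint_sq, pint_mean]
    norm_num
  refine ⟨part1, part2, ?_, ?_⟩
  · have heq : (fun ω => ∫ ω', kocharKernel (X₁ ω) (X₂ ω') (Y₁ ω') (Y₂ ω') ∂ℙ)
        = fun ω => -(4/3)*(G (X₁ ω))^3 + 4*(G (X₁ ω))^2 - 2*(G (X₁ ω)) :=
      funext fun ω => part1 (X₁ ω)
    rw [heq]
    exact hvar X₁ hX₁ hμ.symm
  · have heq : (fun ω => ∫ ω', kocharKernel (X₁ ω') (X₂ ω') (Y₁ ω) (Y₂ ω') ∂ℙ)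
        = (-1 : ℝ) • ((fun ω => -(4/3)*(G (Y₁ ω))^3 + 4*(G (Y₁ ω))^2 - 2*(G (Y₁ ω))) : Ω → ℝ) := by
      funext ω
      simp only [Pi.smul_apply, smul_eq_mul]
      rw [part2 (Y₁ ω)]
      ring
    rw [heq, variance_smul, hvar Y₁ hY₁ hmY1]
    norm_num
end

section
/- Let F and G be continuous cumulative distribution functions, let X_1, X_2 be i.i.d. ~ F and, independently, Y_1, Y_2 i.i.d. ~ G. Define δ(s,t) = (1 − F(s))(1 − G(t)) − (1 − F(t))(1 − G(s)) and η(F;G) = E[δ(max(X_1, Y_1), min(X_1, Y_1))]. Then η(F;G) = P(Y_1 ≤ Y_2 ≤ X_1 ≤ X_2) + P(X_1 ≤ Y_1 ≤ Y_2 ≤ X_2) − P(X_1 ≤ X_2 ≤ Y_1 ≤ Y_2) − P(Y_1 ≤ X_1 ≤ X_2 ≤ Y_2). -/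
open MeasureTheory ProbabilityTheory Filter Finset

section helpers
lemma kochar_null_of_sections {α β : Type*} [MeasurableSpace α] [MeasurableSpace β]
    (κ : Measure α) (m : Measure β) [SFinite m] (S : Set (α × β)) (hS : MeasurableSet S)
    (h : ∀ a, m (Prod.mk a ⁻¹' S) = 0) : (κ.prod m) S = 0 := by
  rw [Measure.prod_apply hS]; simp [h]

lemma kochar_fiber_fst (μ ν : Measure ℝ) [IsProbabilityMeasure μ] [IsProbabilityMeasure ν]
    (hμ : ∀ a, μ {a} = 0) (a : ℝ) : (μ.prod ν) {r : ℝ × ℝ | r.1 = a} = 0 := by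
  have h1 : {r : ℝ × ℝ | r.1 = a} = ({a} : Set ℝ) ×ˢ (Set.univ : Set ℝ) := by
    ext ⟨r1, r2⟩; simp [eq_comm]
  rw [h1, Measure.prod_prod, hμ]; simp

lemma kochar_fiber_snd (μ ν : Measure ℝ) [IsProbabilityMeasure μ] [IsProbabilityMeasure ν]
    (hν : ∀ a, ν {a} = 0) (a : ℝ) : (μ.prod ν) {r : ℝ × ℝ | r.2 = a} = 0 := by
  have h1 : {r : ℝ × ℝ | r.2 = a} = (Set.univ : Set ℝ) ×ˢ ({a} : Set ℝ) := by
    ext ⟨r1, r2⟩; simp [eq_comm]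
  rw [h1, Measure.prod_prod, hν]; simp

lemma kochar_diag_null (μ ν : Measure ℝ) [IsProbabilityMeasure μ] [IsProbabilityMeasure ν]
    (hν : ∀ a, ν {a} = 0) : (μ.prod ν) {q : ℝ × ℝ | q.1 = q.2} = 0 := by
  have hm : MeasurableSet {q : ℝ × ℝ | q.1 = q.2} :=
    measurableSet_eq_fun measurable_fst measurable_snd
  refine kochar_null_of_sections μ ν _ hm fun x => ?_
  have : (Prod.mk x ⁻¹' {q : ℝ × ℝ | q.1 = q.2}) = {x} := by ext y; simp [eq_comm]
  rw [this]; exact hν x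

lemma kochar_atomless (μ : Measure ℝ) [IsProbabilityMeasure μ] (F : ℝ → ℝ)
    (hF : ∀ t, F t = (μ (Set.Iic t)).toReal) (hc : Continuous F) (t : ℝ) : μ {t} = 0 := by
  have key : ∀ s, s < t → (μ {t}).toReal ≤ F t - F s := by
    intro s hs
    have h1 : μ {t} ≤ μ (Set.Ioc s t) := by
      apply measure_mono; simp [Set.singleton_subset_iff, hs]
    have h2 : μ (Set.Ioc s t) = μ (Set.Iic t) - μ (Set.Iic s) := by
      rw [show Set.Ioc s t = Set.Iic t \ Set.Iic s by ext x; simp [and_comm]]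
      exact measure_diff (Set.Iic_subset_Iic.2 hs.le) measurableSet_Iic.nullMeasurableSet
        (measure_ne_top _ _)
    have h3 := ENNReal.toReal_mono (by rw [h2]; exact (tsub_le_self.trans_lt (measure_lt_top _ _)).ne) h1
    rw [h2, ENNReal.toReal_sub_of_le (measure_mono (Set.Iic_subset_Iic.2 hs.le)) (measure_ne_top _ _)] at h3
    rw [hF t, hF s]; exact h3
  have h0 : (μ {t}).toReal ≤ 0 := by
    by_contra h
    push_neg at h
    obtain ⟨δ, hδ, hδ'⟩ := Metric.continuousAt_iff.1 (hc.continuousAt (x := t)) _ h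
    have hs : t - δ/2 < t := by linarith
    have hd : dist (t - δ/2) t < δ := by
      rw [Real.dist_eq]; rw [abs_of_nonpos (by linarith)]; linarith
    have := hδ' hd
    rw [Real.dist_eq] at this
    have h4 := key _ hs
    linarith [le_abs_self (F t - F (t - δ/2)), abs_sub_comm (F (t - δ/2)) (F t)]
  have := le_antisymm h0 ENNReal.toReal_nonneg
  rcases (ENNReal.toReal_eq_zero_iff _).1 this with h | h
  · exact h
  · exact absurd h (measure_ne_top _ _)

lemma kochar_map_pair_pair {Ω : Type*} [MeasurableSpace Ω] (P : Measure Ω) [IsFiniteMeasure P]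
    (W₁ W₂ W₃ W₄ : Ω → ℝ) (h₁ : Measurable W₁) (h₂ : Measurable W₂)
    (h₃ : Measurable W₃) (h₄ : Measurable W₄)
    (h12 : IndepFun W₁ W₂ P) (h34 : IndepFun W₃ W₄ P)
    (hp : IndepFun (fun ω => (W₁ ω, W₂ ω)) (fun ω => (W₃ ω, W₄ ω)) P) :
    P.map (fun ω => ((W₁ ω, W₂ ω), (W₃ ω, W₄ ω)))
      = ((P.map W₁).prod (P.map W₂)).prod ((P.map W₃).prod (P.map W₄)) := by
  rw [(indepFun_iff_map_prod_eq_prod_map_map ((h₁.prodMk h₂).aemeasurable)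
        ((h₃.prodMk h₄).aemeasurable)).mp hp,
      (indepFun_iff_map_prod_eq_prod_map_map h₁.aemeasurable h₂.aemeasurable).mp h12,
      (indepFun_iff_map_prod_eq_prod_map_map h₃.aemeasurable h₄.aemeasurable).mp h34]
end helpers

/-- the Kochar functional η(F;G) as a combination of ordering probabilities. -/
theorem kochar_eta_representation
    {Ω : Type*} [MeasureSpace Ω] [IsProbabilityMeasure (ℙ : Measure Ω)]
    (X₁ X₂ Y₁ Y₂ : Ω → ℝ)
    (hX₁ : Measurable X₁) (hX₂ : Measurable X₂)
    (hY₁ : Measurable Y₁) (hY₂ : Measurable Y₂)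
    (hindep : iIndepFun ![X₁, X₂, Y₁, Y₂] ℙ)
    (hXid : IdentDistrib X₂ X₁ ℙ ℙ) (hYid : IdentDistrib Y₂ Y₁ ℙ ℙ)
    (F G : ℝ → ℝ)
    (hF : ∀ t, F t = (ℙ {ω | X₁ ω ≤ t}).toReal)
    (hG : ∀ t, G t = (ℙ {ω | Y₁ ω ≤ t}).toReal)
    (hFcont : Continuous F) (hGcont : Continuous G) :
    (∫ ω, ((1 - F (max (X₁ ω) (Y₁ ω))) * (1 - G (min (X₁ ω) (Y₁ ω)))
         - (1 - F (min (X₁ ω) (Y₁ ω))) * (1 - G (max (X₁ ω) (Y₁ ω)))) ∂ℙ)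
      = (ℙ {ω | Y₁ ω ≤ Y₂ ω ∧ Y₂ ω ≤ X₁ ω ∧ X₁ ω ≤ X₂ ω}).toReal
      + (ℙ {ω | X₁ ω ≤ Y₁ ω ∧ Y₁ ω ≤ Y₂ ω ∧ Y₂ ω ≤ X₂ ω}).toReal
      - (ℙ {ω | X₁ ω ≤ X₂ ω ∧ X₂ ω ≤ Y₁ ω ∧ Y₁ ω ≤ Y₂ ω}).toReal
      - (ℙ {ω | Y₁ ω ≤ X₁ ω ∧ X₁ ω ≤ X₂ ω ∧ X₂ ω ≤ Y₂ ω}).toReal := by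
  -- marginals
  set μ : Measure ℝ := Measure.map X₁ ℙ with hμdef
  set ν : Measure ℝ := Measure.map Y₁ ℙ with hνdef
  haveI : IsProbabilityMeasure μ := Measure.isProbabilityMeasure_map hX₁.aemeasurable
  haveI : IsProbabilityMeasure ν := Measure.isProbabilityMeasure_map hY₁.aemeasurable
  set ρ : Measure ((ℝ × ℝ) × (ℝ × ℝ)) := (μ.prod ν).prod (μ.prod ν) with hρdef
  haveI : IsProbabilityMeasure ρ := by infer_instance
  -- CDF facts
  have hFIic : ∀ s, F s = (μ (Set.Iic s)).toReal := by
    intro s; rw [hF s, hμdef, Measure.map_apply hX₁ measurableSet_Iic]; rfl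
  have hGIic : ∀ s, G s = (ν (Set.Iic s)).toReal := by
    intro s; rw [hG s, hνdef, Measure.map_apply hY₁ measurableSet_Iic]; rfl
  have hμ0 : ∀ a, μ {a} = 0 := kochar_atomless μ F hFIic hFcont
  have hν0 : ∀ a, ν {a} = 0 := kochar_atomless ν G hGIic hGcont
  have hFbar : ∀ s, 1 - F s = (μ (Set.Ioi s)).toReal := by
    intro s
    have h1 : μ (Set.Ioi s) = 1 - μ (Set.Iic s) := by
      rw [← Set.compl_Iic]; exact prob_compl_eq_one_sub measurableSet_Iic
    rw [h1, ENNReal.toReal_sub_of_le prob_le_one (by simp), hFIic]; simp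
  have hGbar : ∀ s, 1 - G s = (ν (Set.Ioi s)).toReal := by
    intro s
    have h1 : ν (Set.Ioi s) = 1 - ν (Set.Iic s) := by
      rw [← Set.compl_Iic]; exact prob_compl_eq_one_sub measurableSet_Iic
    rw [h1, ENNReal.toReal_sub_of_le prob_le_one (by simp), hGIic]; simp
  -- the sets
  set A : Set ((ℝ × ℝ) × (ℝ × ℝ)) :=
    {p | max p.1.1 p.1.2 < p.2.1 ∧ min p.1.1 p.1.2 < p.2.2} with hAdef
  set B : Set ((ℝ × ℝ) × (ℝ × ℝ)) :=
    {p | min p.1.1 p.1.2 < p.2.1 ∧ max p.1.1 p.1.2 < p.2.2} with hBdef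
  set C₁ : Set ((ℝ × ℝ) × (ℝ × ℝ)) :=
    {p | p.1.2 < p.2.2 ∧ p.2.2 < p.1.1 ∧ p.1.1 < p.2.1} with hC₁def
  set C₂ : Set ((ℝ × ℝ) × (ℝ × ℝ)) :=
    {p | p.1.1 < p.2.2 ∧ p.2.2 < p.1.2 ∧ p.1.2 < p.2.1} with hC₂def
  set D₁ : Set ((ℝ × ℝ) × (ℝ × ℝ)) :=
    {p | p.1.1 < p.2.1 ∧ p.2.1 < p.1.2 ∧ p.1.2 < p.2.2} with hD₁def
  set D₂ : Set ((ℝ × ℝ) × (ℝ × ℝ)) :=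
    {p | p.1.2 < p.2.1 ∧ p.2.1 < p.1.1 ∧ p.1.1 < p.2.2} with hD₂def
  set S₁ : Set ((ℝ × ℝ) × (ℝ × ℝ)) :=
    {p | p.1.2 ≤ p.2.2 ∧ p.2.2 ≤ p.1.1 ∧ p.1.1 ≤ p.2.1} with hS₁def
  set S₂ : Set ((ℝ × ℝ) × (ℝ × ℝ)) :=
    {p | p.1.1 ≤ p.2.2 ∧ p.2.2 ≤ p.1.2 ∧ p.1.2 ≤ p.2.1} with hS₂def
  set S₃ : Set ((ℝ × ℝ) × (ℝ × ℝ)) :=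
    {p | p.1.1 ≤ p.2.1 ∧ p.2.1 ≤ p.1.2 ∧ p.1.2 ≤ p.2.2} with hS₃def
  set S₄ : Set ((ℝ × ℝ) × (ℝ × ℝ)) :=
    {p | p.1.2 ≤ p.2.1 ∧ p.2.1 ≤ p.1.1 ∧ p.1.1 ≤ p.2.2} with hS₄def
  set N : Set ((ℝ × ℝ) × (ℝ × ℝ)) :=
    {p | p.1.1 = p.1.2 ∨ p.1.1 = p.2.1 ∨ p.1.1 = p.2.2 ∨ p.1.2 = p.2.1 ∨ p.1.2 = p.2.2}
    with hNdef
  have m11 : Measurable fun p : (ℝ × ℝ) × (ℝ × ℝ) => p.1.1 := measurable_fst.fst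
  have m12 : Measurable fun p : (ℝ × ℝ) × (ℝ × ℝ) => p.1.2 := measurable_fst.snd
  have m21 : Measurable fun p : (ℝ × ℝ) × (ℝ × ℝ) => p.2.1 := measurable_snd.fst
  have m22 : Measurable fun p : (ℝ × ℝ) × (ℝ × ℝ) => p.2.2 := measurable_snd.snd
  have hAm : MeasurableSet A :=
    (measurableSet_lt (m11.max m12) m21).inter (measurableSet_lt (m11.min m12) m22)
  have hBm : MeasurableSet B :=
    (measurableSet_lt (m11.min m12) m21).inter (measurableSet_lt (m11.max m12) m22)
  have hC₁m : MeasurableSet C₁ :=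
    (measurableSet_lt m12 m22).inter ((measurableSet_lt m22 m11).inter (measurableSet_lt m11 m21))
  have hC₂m : MeasurableSet C₂ :=
    (measurableSet_lt m11 m22).inter ((measurableSet_lt m22 m12).inter (measurableSet_lt m12 m21))
  have hD₁m : MeasurableSet D₁ :=
    (measurableSet_lt m11 m21).inter ((measurableSet_lt m21 m12).inter (measurableSet_lt m12 m22))
  have hD₂m : MeasurableSet D₂ :=
    (measurableSet_lt m12 m21).inter ((measurableSet_lt m21 m11).inter (measurableSet_lt m11 m22))
  have hS₁m : MeasurableSet S₁ :=
    (measurableSet_le m12 m22).inter ((measurableSet_le m22 m11).inter (measurableSet_le m11 m21))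
  have hS₂m : MeasurableSet S₂ :=
    (measurableSet_le m11 m22).inter ((measurableSet_le m22 m12).inter (measurableSet_le m12 m21))
  have hS₃m : MeasurableSet S₃ :=
    (measurableSet_le m11 m21).inter ((measurableSet_le m21 m12).inter (measurableSet_le m12 m22))
  have hS₄m : MeasurableSet S₄ :=
    (measurableSet_le m12 m21).inter ((measurableSet_le m21 m11).inter (measurableSet_le m11 m22))
  -- N is null
  have hN : ρ N = 0 := by
    have h1 : ρ {p : (ℝ × ℝ) × (ℝ × ℝ) | p.1.1 = p.1.2} = 0 := by
      have he : {p : (ℝ × ℝ) × (ℝ × ℝ) | p.1.1 = p.1.2}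
          = {q : ℝ × ℝ | q.1 = q.2} ×ˢ (Set.univ : Set (ℝ × ℝ)) := by
        ext ⟨⟨a, b⟩, ⟨c, d⟩⟩; simp
      rw [hρdef, he, Measure.prod_prod, kochar_diag_null μ ν hν0, zero_mul]
    have h2 : ρ {p : (ℝ × ℝ) × (ℝ × ℝ) | p.1.1 = p.2.1} = 0 := by
      refine kochar_null_of_sections _ _ _ (measurableSet_eq_fun m11 m21) fun q => ?_
      have he : Prod.mk q ⁻¹' {p : (ℝ × ℝ) × (ℝ × ℝ) | p.1.1 = p.2.1}
          = {r : ℝ × ℝ | r.1 = q.1} := by ext r; simp [eq_comm]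
      rw [he]; exact kochar_fiber_fst μ ν hμ0 q.1
    have h3 : ρ {p : (ℝ × ℝ) × (ℝ × ℝ) | p.1.1 = p.2.2} = 0 := by
      refine kochar_null_of_sections _ _ _ (measurableSet_eq_fun m11 m22) fun q => ?_
      have he : Prod.mk q ⁻¹' {p : (ℝ × ℝ) × (ℝ × ℝ) | p.1.1 = p.2.2}
          = {r : ℝ × ℝ | r.2 = q.1} := by ext r; simp [eq_comm]
      rw [he]; exact kochar_fiber_snd μ ν hν0 q.1
    have h4 : ρ {p : (ℝ × ℝ) × (ℝ × ℝ) | p.1.2 = p.2.1} = 0 := by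
      refine kochar_null_of_sections _ _ _ (measurableSet_eq_fun m12 m21) fun q => ?_
      have he : Prod.mk q ⁻¹' {p : (ℝ × ℝ) × (ℝ × ℝ) | p.1.2 = p.2.1}
          = {r : ℝ × ℝ | r.1 = q.2} := by ext r; simp [eq_comm]
      rw [he]; exact kochar_fiber_fst μ ν hμ0 q.2
    have h5 : ρ {p : (ℝ × ℝ) × (ℝ × ℝ) | p.1.2 = p.2.2} = 0 := by
      refine kochar_null_of_sections _ _ _ (measurableSet_eq_fun m12 m22) fun q => ?_
      have he : Prod.mk q ⁻¹' {p : (ℝ × ℝ) × (ℝ × ℝ) | p.1.2 = p.2.2}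
          = {r : ℝ × ℝ | r.2 = q.2} := by ext r; simp [eq_comm]
      rw [he]; exact kochar_fiber_snd μ ν hν0 q.2
    have : N = {p : (ℝ × ℝ) × (ℝ × ℝ) | p.1.1 = p.1.2} ∪ ({p | p.1.1 = p.2.1} ∪
        ({p | p.1.1 = p.2.2} ∪ ({p | p.1.2 = p.2.1} ∪ {p | p.1.2 = p.2.2}))) := rfl
    rw [this]
    exact measure_union_null h1 (measure_union_null h2 (measure_union_null h3
      (measure_union_null h4 h5)))
  -- helper for null-difference equalities
  have key_eq : ∀ (U V : Set ((ℝ × ℝ) × (ℝ × ℝ))), V ⊆ U → U \ V ⊆ N → ρ U = ρ V := by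
    intro U V hVU hUV
    have h1 : ρ (U \ V) = 0 := measure_mono_null hUV hN
    calc ρ U = ρ (V ∪ (U \ V)) := by rw [Set.union_diff_cancel hVU]
      _ = ρ V := le_antisymm ((measure_union_le _ _).trans (by rw [h1, add_zero]))
        (measure_mono Set.subset_union_left)
  -- decomposition of A-B and B-A
  have hsubC : C₁ ∪ C₂ ⊆ A \ B := by
    rintro ⟨⟨x, y⟩, ⟨z, w⟩⟩ (⟨h1, h2, h3⟩ | ⟨h1, h2, h3⟩)
    · exact ⟨⟨max_lt h3 (h1.trans (h2.trans h3)), (min_le_right x y).trans_lt h1⟩,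
        fun hB => absurd hB.2 (not_lt.mpr (h2.le.trans (le_max_left x y)))⟩
    · exact ⟨⟨max_lt (h1.trans (h2.trans h3)) h3, (min_le_left x y).trans_lt h1⟩,
        fun hB => absurd hB.2 (not_lt.mpr (h2.le.trans (le_max_right x y)))⟩
  have hremC : (A \ B) \ (C₁ ∪ C₂) ⊆ N := by
    rintro ⟨⟨x, y⟩, ⟨z, w⟩⟩ ⟨⟨⟨hmaxz, hminw⟩, hnB⟩, hnC⟩
    have hminz : min x y < z := min_le_max.trans_lt hmaxz
    have hwmax : w ≤ max x y := by
      by_contra hw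
      exact hnB ⟨hminz, not_le.mp hw⟩
    rcases lt_trichotomy x y with hxy | hxy | hxy
    · have hxw : x < w := (min_eq_left hxy.le) ▸ hminw
      have hyz : y < z := (max_eq_right hxy.le) ▸ hmaxz
      have hwy : w ≤ y := (max_eq_right hxy.le) ▸ hwmax
      rcases eq_or_lt_of_le hwy with he | hlt
      · exact Or.inr (Or.inr (Or.inr (Or.inr he.symm)))
      · exact absurd (Or.inr ⟨hxw, hlt, hyz⟩) hnC
    · exact Or.inl hxy
    · have hyw : y < w := (min_eq_right hxy.le) ▸ hminw
      have hxz : x < z := (max_eq_left hxy.le) ▸ hmaxz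
      have hwx : w ≤ x := (max_eq_left hxy.le) ▸ hwmax
      rcases eq_or_lt_of_le hwx with he | hlt
      · exact Or.inr (Or.inr (Or.inl he.symm))
      · exact absurd (Or.inl ⟨hyw, hlt, hxz⟩) hnC
  have hdisjC : Disjoint C₁ C₂ := by
    rw [Set.disjoint_left]
    rintro ⟨⟨x, y⟩, ⟨z, w⟩⟩ ⟨h1, h2, _⟩ ⟨h1', h2', _⟩
    exact absurd (h1.trans h2) (not_lt.mpr (h1'.trans h2').le)
  have hABeq : ρ (A \ B) = ρ C₁ + ρ C₂ := by
    rw [key_eq (A \ B) (C₁ ∪ C₂) hsubC hremC, measure_union hdisjC hC₂m]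
  have hsubD : D₁ ∪ D₂ ⊆ B \ A := by
    rintro ⟨⟨x, y⟩, ⟨z, w⟩⟩ (⟨h1, h2, h3⟩ | ⟨h1, h2, h3⟩)
    · exact ⟨⟨(min_le_left x y).trans_lt h1, max_lt (h1.trans (h2.trans h3)) h3⟩,
        fun hA => absurd hA.1 (not_lt.mpr (h2.le.trans (le_max_right x y)))⟩
    · exact ⟨⟨(min_le_right x y).trans_lt h1, max_lt h3 (h1.trans (h2.trans h3))⟩,
        fun hA => absurd hA.1 (not_lt.mpr (h2.le.trans (le_max_left x y)))⟩
  have hremD : (B \ A) \ (D₁ ∪ D₂) ⊆ N := by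
    rintro ⟨⟨x, y⟩, ⟨z, w⟩⟩ ⟨⟨⟨hminz, hmaxw⟩, hnA⟩, hnD⟩
    have hminw : min x y < w := min_le_max.trans_lt hmaxw
    have hzmax : z ≤ max x y := by
      by_contra hz
      exact hnA ⟨not_le.mp hz, hminw⟩
    rcases lt_trichotomy x y with hxy | hxy | hxy
    · have hxz : x < z := (min_eq_left hxy.le) ▸ hminz
      have hyw : y < w := (max_eq_right hxy.le) ▸ hmaxw
      have hzy : z ≤ y := (max_eq_right hxy.le) ▸ hzmax
      rcases eq_or_lt_of_le hzy with he | hlt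
      · exact Or.inr (Or.inr (Or.inr (Or.inl he.symm)))
      · exact absurd (Or.inl ⟨hxz, hlt, hyw⟩) hnD
    · exact Or.inl hxy
    · have hyz : y < z := (min_eq_right hxy.le) ▸ hminz
      have hxw : x < w := (max_eq_left hxy.le) ▸ hmaxw
      have hzx : z ≤ x := (max_eq_left hxy.le) ▸ hzmax
      rcases eq_or_lt_of_le hzx with he | hlt
      · exact Or.inr (Or.inl he.symm)
      · exact absurd (Or.inr ⟨hyz, hlt, hxw⟩) hnD
  have hdisjD : Disjoint D₁ D₂ := by
    rw [Set.disjoint_left]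
    rintro ⟨⟨x, y⟩, ⟨z, w⟩⟩ ⟨h1, h2, _⟩ ⟨h1', h2', _⟩
    exact absurd (h1.trans h2) (not_lt.mpr (h1'.trans h2').le)
  have hBAeq : ρ (B \ A) = ρ D₁ + ρ D₂ := by
    rw [key_eq (B \ A) (D₁ ∪ D₂) hsubD hremD, measure_union hdisjD hD₂m]
  -- closed cells equal open cells
  have hS₁eq : ρ S₁ = ρ C₁ := by
    refine key_eq S₁ C₁ (fun p ⟨h1, h2, h3⟩ => ⟨h1.le, h2.le, h3.le⟩) ?_
    rintro ⟨⟨x, y⟩, ⟨z, w⟩⟩ ⟨⟨h1, h2, h3⟩, hn⟩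
    rcases eq_or_lt_of_le h1 with he | h1'
    · exact Or.inr (Or.inr (Or.inr (Or.inr he)))
    rcases eq_or_lt_of_le h2 with he | h2'
    · exact Or.inr (Or.inr (Or.inl he.symm))
    rcases eq_or_lt_of_le h3 with he | h3'
    · exact Or.inr (Or.inl he)
    exact absurd ⟨h1', h2', h3'⟩ hn
  have hS₂eq : ρ S₂ = ρ C₂ := by
    refine key_eq S₂ C₂ (fun p ⟨h1, h2, h3⟩ => ⟨h1.le, h2.le, h3.le⟩) ?_
    rintro ⟨⟨x, y⟩, ⟨z, w⟩⟩ ⟨⟨h1, h2, h3⟩, hn⟩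
    rcases eq_or_lt_of_le h1 with he | h1'
    · exact Or.inr (Or.inr (Or.inl he))
    rcases eq_or_lt_of_le h2 with he | h2'
    · exact Or.inr (Or.inr (Or.inr (Or.inr he.symm)))
    rcases eq_or_lt_of_le h3 with he | h3'
    · exact Or.inr (Or.inr (Or.inr (Or.inl he)))
    exact absurd ⟨h1', h2', h3'⟩ hn
  have hS₃eq : ρ S₃ = ρ D₁ := by
    refine key_eq S₃ D₁ (fun p ⟨h1, h2, h3⟩ => ⟨h1.le, h2.le, h3.le⟩) ?_
    rintro ⟨⟨x, y⟩, ⟨z, w⟩⟩ ⟨⟨h1, h2, h3⟩, hn⟩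
    rcases eq_or_lt_of_le h1 with he | h1'
    · exact Or.inr (Or.inl he)
    rcases eq_or_lt_of_le h2 with he | h2'
    · exact Or.inr (Or.inr (Or.inr (Or.inl he.symm)))
    rcases eq_or_lt_of_le h3 with he | h3'
    · exact Or.inr (Or.inr (Or.inr (Or.inr he)))
    exact absurd ⟨h1', h2', h3'⟩ hn
  have hS₄eq : ρ S₄ = ρ D₂ := by
    refine key_eq S₄ D₂ (fun p ⟨h1, h2, h3⟩ => ⟨h1.le, h2.le, h3.le⟩) ?_
    rintro ⟨⟨x, y⟩, ⟨z, w⟩⟩ ⟨⟨h1, h2, h3⟩, hn⟩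
    rcases eq_or_lt_of_le h1 with he | h1'
    · exact Or.inr (Or.inr (Or.inr (Or.inl he)))
    rcases eq_or_lt_of_le h2 with he | h2'
    · exact Or.inr (Or.inl he.symm)
    rcases eq_or_lt_of_le h3 with he | h3'
    · exact Or.inr (Or.inr (Or.inl he))
    exact absurd ⟨h1', h2', h3'⟩ hn
  -- joint distribution maps
  have hmeasv : ∀ i, Measurable (![X₁, X₂, Y₁, Y₂] i) := by
    intro i; fin_cases i <;> assumption
  have i02 : IndepFun X₁ Y₁ ℙ := by
    simpa using hindep.indepFun (show (0 : Fin 4) ≠ 2 by decide)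
  have i13 : IndepFun X₂ Y₂ ℙ := by
    simpa using hindep.indepFun (show (1 : Fin 4) ≠ 3 by decide)
  have i03 : IndepFun X₁ Y₂ ℙ := by
    simpa using hindep.indepFun (show (0 : Fin 4) ≠ 3 by decide)
  have i12 : IndepFun X₂ Y₁ ℙ := by
    simpa using hindep.indepFun (show (1 : Fin 4) ≠ 2 by decide)
  have ip1 : IndepFun (fun ω => (X₁ ω, Y₁ ω)) (fun ω => (X₂ ω, Y₂ ω)) ℙ := by
    simpa using hindep.indepFun_prodMk_prodMk hmeasv 0 2 1 3
      (by decide) (by decide) (by decide) (by decide)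
  have ip2 : IndepFun (fun ω => (X₁ ω, Y₂ ω)) (fun ω => (X₂ ω, Y₁ ω)) ℙ := by
    simpa using hindep.indepFun_prodMk_prodMk hmeasv 0 3 1 2
      (by decide) (by decide) (by decide) (by decide)
  have hmap1 : Measure.map (fun ω => ((X₁ ω, Y₁ ω), (X₂ ω, Y₂ ω))) ℙ = ρ := by
    rw [kochar_map_pair_pair ℙ X₁ Y₁ X₂ Y₂ hX₁ hY₁ hX₂ hY₂ i02 i13 ip1, hXid.map_eq, hYid.map_eq]
  have hmap2 : Measure.map (fun ω => ((X₁ ω, Y₂ ω), (X₂ ω, Y₁ ω))) ℙ = ρ := by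
    rw [kochar_map_pair_pair ℙ X₁ Y₂ X₂ Y₁ hX₁ hY₂ hX₂ hY₁ i03 i12 ip2, hXid.map_eq, hYid.map_eq]
  have hmap3 : Measure.map (fun ω => ((X₂ ω, Y₁ ω), (X₁ ω, Y₂ ω))) ℙ = ρ := by
    rw [kochar_map_pair_pair ℙ X₂ Y₁ X₁ Y₂ hX₂ hY₁ hX₁ hY₂ i12 i03 ip2.symm,
      hXid.map_eq, hYid.map_eq]
  have hT1m : Measurable fun ω => ((X₁ ω, Y₁ ω), (X₂ ω, Y₂ ω)) :=
    (hX₁.prodMk hY₁).prodMk (hX₂.prodMk hY₂)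
  have hT2m : Measurable fun ω => ((X₁ ω, Y₂ ω), (X₂ ω, Y₁ ω)) :=
    (hX₁.prodMk hY₂).prodMk (hX₂.prodMk hY₁)
  have hT3m : Measurable fun ω => ((X₂ ω, Y₁ ω), (X₁ ω, Y₂ ω)) :=
    (hX₂.prodMk hY₁).prodMk (hX₁.prodMk hY₂)
  have e1 : ℙ {ω | Y₁ ω ≤ Y₂ ω ∧ Y₂ ω ≤ X₁ ω ∧ X₁ ω ≤ X₂ ω} = ρ S₁ := by
    rw [← hmap1, Measure.map_apply hT1m hS₁m]; rfl
  have e2 : ℙ {ω | X₁ ω ≤ Y₁ ω ∧ Y₁ ω ≤ Y₂ ω ∧ Y₂ ω ≤ X₂ ω} = ρ S₂ := by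
    rw [← hmap2, Measure.map_apply hT2m hS₂m]; rfl
  have e3 : ℙ {ω | X₁ ω ≤ X₂ ω ∧ X₂ ω ≤ Y₁ ω ∧ Y₁ ω ≤ Y₂ ω} = ρ S₃ := by
    rw [← hmap1, Measure.map_apply hT1m hS₃m]; rfl
  have e4 : ℙ {ω | Y₁ ω ≤ X₁ ω ∧ X₁ ω ≤ X₂ ω ∧ X₂ ω ≤ Y₂ ω} = ρ S₄ := by
    rw [← hmap3, Measure.map_apply hT3m hS₄m]; rfl
  -- bounds
  have hFle : ∀ s, 0 ≤ 1 - F s := fun s => (hFbar s) ▸ ENNReal.toReal_nonneg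
  have hGle : ∀ s, 0 ≤ 1 - G s := fun s => (hGbar s) ▸ ENNReal.toReal_nonneg
  have hFle1 : ∀ s, 1 - F s ≤ 1 := by
    intro s; rw [hFbar s]
    calc (μ (Set.Ioi s)).toReal ≤ (1 : ENNReal).toReal :=
          ENNReal.toReal_mono (by simp) prob_le_one
      _ = 1 := by simp
  have hGle1 : ∀ s, 1 - G s ≤ 1 := by
    intro s; rw [hGbar s]
    calc (ν (Set.Ioi s)).toReal ≤ (1 : ENNReal).toReal :=
          ENNReal.toReal_mono (by simp) prob_le_one
      _ = 1 := by simp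
  -- the two integrand factors
  set g₁ : ℝ × ℝ → ℝ := fun q => (1 - F (max q.1 q.2)) * (1 - G (min q.1 q.2)) with hg₁def
  set g₂ : ℝ × ℝ → ℝ := fun q => (1 - F (min q.1 q.2)) * (1 - G (max q.1 q.2)) with hg₂def
  have hg₁c : Continuous g₁ :=
    (continuous_const.sub (hFcont.comp (continuous_fst.max continuous_snd))).mul
      (continuous_const.sub (hGcont.comp (continuous_fst.min continuous_snd)))
  have hg₂c : Continuous g₂ :=
    (continuous_const.sub (hFcont.comp (continuous_fst.min continuous_snd))).mul
      (continuous_const.sub (hGcont.comp (continuous_fst.max continuous_snd)))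
  have hg₁0 : ∀ q, 0 ≤ g₁ q := fun q => mul_nonneg (hFle _) (hGle _)
  have hg₂0 : ∀ q, 0 ≤ g₂ q := fun q => mul_nonneg (hFle _) (hGle _)
  have hg₁1 : ∀ q : ℝ × ℝ, g₁ q ≤ 1 := fun q => by
    have := hFle (max q.1 q.2); have := hFle1 (max q.1 q.2)
    have := hGle (min q.1 q.2); have := hGle1 (min q.1 q.2)
    simp only [hg₁def]; nlinarith
  have hg₂1 : ∀ q : ℝ × ℝ, g₂ q ≤ 1 := fun q => by
    have := hFle (min q.1 q.2); have := hFle1 (min q.1 q.2)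
    have := hGle (max q.1 q.2); have := hGle1 (max q.1 q.2)
    simp only [hg₂def]; nlinarith
  have hint : ∀ g : ℝ × ℝ → ℝ, Continuous g → (∀ q, 0 ≤ g q) → (∀ q, g q ≤ 1) →
      Integrable g (μ.prod ν) := by
    intro g hc h0 h1
    refine Integrable.mono' (integrable_const 1) hc.aestronglyMeasurable
      (ae_of_all _ fun q => ?_)
    rw [Real.norm_eq_abs, abs_of_nonneg (h0 q)]; exact h1 q
  have hI : ∀ (g : ℝ × ℝ → ℝ), Continuous g → (∀ q, 0 ≤ g q) →
      ∀ (U : Set ((ℝ × ℝ) × (ℝ × ℝ))), MeasurableSet U →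
      (∀ q : ℝ × ℝ, ENNReal.ofReal (g q) = (μ.prod ν) (Prod.mk q ⁻¹' U)) →
      ∫ q, g q ∂(μ.prod ν) = (ρ U).toReal := by
    intro g hc h0 U hU hsec
    rw [integral_eq_lintegral_of_nonneg_ae (ae_of_all _ h0) hc.aestronglyMeasurable]
    congr 1
    rw [hρdef, Measure.prod_apply hU]
    exact lintegral_congr hsec
  have hI₁ : ∫ q, g₁ q ∂(μ.prod ν) = (ρ A).toReal := by
    refine hI g₁ hg₁c hg₁0 A hAm fun q => ?_
    have hpre : Prod.mk q ⁻¹' A = Set.Ioi (max q.1 q.2) ×ˢ Set.Ioi (min q.1 q.2) := rfl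
    rw [hpre, Measure.prod_prod]
    simp only [hg₁def]
    rw [hFbar, hGbar, ← ENNReal.toReal_mul,
      ENNReal.ofReal_toReal (ENNReal.mul_ne_top (measure_ne_top _ _) (measure_ne_top _ _))]
  have hI₂ : ∫ q, g₂ q ∂(μ.prod ν) = (ρ B).toReal := by
    refine hI g₂ hg₂c hg₂0 B hBm fun q => ?_
    have hpre : Prod.mk q ⁻¹' B = Set.Ioi (min q.1 q.2) ×ˢ Set.Ioi (max q.1 q.2) := rfl
    rw [hpre, Measure.prod_prod]
    simp only [hg₂def]
    rw [hFbar, hGbar, ← ENNReal.toReal_mul,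
      ENNReal.ofReal_toReal (ENNReal.mul_ne_top (measure_ne_top _ _) (measure_ne_top _ _))]
  -- the left-hand side
  have h02' : Measure.map (fun ω => (X₁ ω, Y₁ ω)) ℙ = μ.prod ν :=
    (indepFun_iff_map_prod_eq_prod_map_map hX₁.aemeasurable hY₁.aemeasurable).mp i02
  have hLHS : (∫ ω, ((1 - F (max (X₁ ω) (Y₁ ω))) * (1 - G (min (X₁ ω) (Y₁ ω)))
         - (1 - F (min (X₁ ω) (Y₁ ω))) * (1 - G (max (X₁ ω) (Y₁ ω)))) ∂ℙ)
      = (ρ A).toReal - (ρ B).toReal := by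
    have h1 : (∫ ω, ((1 - F (max (X₁ ω) (Y₁ ω))) * (1 - G (min (X₁ ω) (Y₁ ω)))
         - (1 - F (min (X₁ ω) (Y₁ ω))) * (1 - G (max (X₁ ω) (Y₁ ω)))) ∂ℙ)
        = ∫ q, (g₁ q - g₂ q) ∂(μ.prod ν) := by
      rw [← h02', integral_map (hX₁.prodMk hY₁).aemeasurable
        ((show Continuous (fun q => g₁ q - g₂ q) from hg₁c.sub hg₂c).aestronglyMeasurable)]
    rw [h1, integral_sub (hint g₁ hg₁c hg₁0 hg₁1) (hint g₂ hg₂c hg₂0 hg₂1), hI₁, hI₂]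
  -- final arithmetic
  rw [hLHS, e1, e2, e3, e4, hS₁eq, hS₂eq, hS₃eq, hS₄eq]
  have t1 : ρ A = ρ (A \ B) + ρ (A ∩ B) := (measure_diff_add_inter A hBm).symm
  have t2 : ρ B = ρ (B \ A) + ρ (A ∩ B) := by
    rw [Set.inter_comm]; exact (measure_diff_add_inter B hAm).symm
  have hA' : (ρ A).toReal = (ρ C₁).toReal + (ρ C₂).toReal + (ρ (A ∩ B)).toReal := by
    rw [t1, hABeq, ENNReal.toReal_add (ENNReal.add_ne_top.mpr
      ⟨measure_ne_top _ _, measure_ne_top _ _⟩) (measure_ne_top _ _),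
      ENNReal.toReal_add (measure_ne_top _ _) (measure_ne_top _ _)]
  have hB' : (ρ B).toReal = (ρ D₁).toReal + (ρ D₂).toReal + (ρ (A ∩ B)).toReal := by
    rw [t2, hBAeq, ENNReal.toReal_add (ENNReal.add_ne_top.mpr
      ⟨measure_ne_top _ _, measure_ne_top _ _⟩) (measure_ne_top _ _),
      ENNReal.toReal_add (measure_ne_top _ _) (measure_ne_top _ _)]
  linarith [hA', hB']
end
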